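/- arXiv:2103.01057 — 2 statements merged into one kernel-verified Lean document; each statement's English description precedes it below -/
import Mathlib

section
/- For every nonnegative integer n, the function $E_n(x) := \sum_{j=0}^{n}\frac{e^{2jx}(x+H_{n-j}-H_j)}{j!^2(n-j)!^2}$ vanishes to order at least $2n+1$ at $x=0$, i.e., $E_n(x) = O(x^{2n+1})$ as $x\to 0$; equivalently, the first $2n+1$ Taylor coefficients of $E_n$ at 0 vanish. -/
open Finset Asymptotics

/-- The `n`-th harmonic number `H_n = ∑_{j=1}^n 1/j`, with `H_0 = 0`. -/
noncomputable def H (n : ℕ) : ℝ := ∑ i ∈ Finset.range n, (1 : ℝ) / (i + 1)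

/-- `E_n(x) = ∑_{j=0}^{n} e^{2jx}(x + H_{n-j} - H_j)/(j!² (n-j)!²)`. -/
noncomputable def E (n : ℕ) (x : ℝ) : ℝ :=
  ∑ j ∈ Finset.range (n + 1),
    Real.exp (2 * j * x) * (x + H (n - j) - H j) / ((j.factorial : ℝ) ^ 2 * ((n - j).factorial : ℝ) ^ 2)


namespace EnProof

open PowerSeries TrivSqZeroExt DualNumber

abbrev A : Type := DualNumber ℝ

/-! ### numerals -/

@[simp] lemma fst_two : TrivSqZeroExt.fst (2 : A) = 2 := by
  rw [show (2:A) = ((2:ℕ):A) by norm_cast, fst_natCast]; norm_num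

@[simp] lemma snd_two : TrivSqZeroExt.snd (2 : A) = 0 := by
  rw [show (2:A) = ((2:ℕ):A) by norm_cast, snd_natCast]

@[simp] lemma fst_four : TrivSqZeroExt.fst (4 : A) = 4 := by
  rw [show (4:A) = ((4:ℕ):A) by norm_cast, fst_natCast]; norm_num

@[simp] lemma snd_four : TrivSqZeroExt.snd (4 : A) = 0 := by
  rw [show (4:A) = ((4:ℕ):A) by norm_cast, snd_natCast]

/-! ### the operator -/

noncomputable def Mo (c : A) (f : PowerSeries A) : PowerSeries A :=
  PowerSeries.mk fun j => (2 * (j : A) + c) * PowerSeries.coeff j f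

@[simp] lemma coeff_Mo (c : A) (f : PowerSeries A) (j : ℕ) :
    PowerSeries.coeff j (Mo c f) = (2 * (j : A) + c) * PowerSeries.coeff j f := by
  simp [Mo]

lemma Mo_add (c : A) (f g : PowerSeries A) : Mo c (f + g) = Mo c f + Mo c g := by
  refine PowerSeries.ext fun j => ?_; simp [mul_add]

lemma Mo_sub (c : A) (f g : PowerSeries A) : Mo c (f - g) = Mo c f - Mo c g := by
  refine PowerSeries.ext fun j => ?_; simp [mul_sub]

lemma Mo_mul (b c : A) (f g : PowerSeries A) :
    Mo (b + c) (f * g) = Mo b f * g + f * Mo c g := by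
  refine PowerSeries.ext fun j => ?_
  simp only [coeff_Mo, PowerSeries.coeff_mul, map_add]
  rw [Finset.mul_sum, ← Finset.sum_add_distrib]
  refine Finset.sum_congr rfl fun p hp => ?_
  have hp' : p.1 + p.2 = j := Finset.HasAntidiagonal.mem_antidiagonal.mp hp
  have : (j : A) = (p.1 : A) + (p.2 : A) := by exact_mod_cast congrArg (Nat.cast (R := A)) hp'.symm
  rw [this]; ring

lemma Mo_mul0 (c : A) (f g : PowerSeries A) :
    Mo c (f * g) = Mo 0 f * g + f * Mo c g := by
  simpa using Mo_mul 0 c f g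

/-! ### the sequences -/

lemma H_succ (n : ℕ) : H (n + 1) = H n + 1 / (n + 1) := by
  simp [H, Finset.sum_range_succ]

noncomputable def al (i : ℕ) : A :=
  inl (((i.factorial : ℝ) ^ 2)⁻¹) + inr (-(H i) * ((i.factorial : ℝ) ^ 2)⁻¹)

noncomputable def be (i : ℕ) : A :=
  inl (((i.factorial : ℝ) ^ 2)⁻¹) + inr ((H i) * ((i.factorial : ℝ) ^ 2)⁻¹)

@[simp] lemma al_zero : al 0 = 1 := by simp [al, H]

@[simp] lemma be_zero : be 0 = 1 := by simp [be, H]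

lemma fact_ne (i : ℕ) : ((i.factorial : ℝ)) ≠ 0 := Nat.cast_ne_zero.mpr i.factorial_ne_zero

lemma al_rec (i : ℕ) :
    (2 * ((i + 1 : ℕ) : A) + ε) ^ 2 * al (i + 1) = 4 * al i := by
  have hk : ((i:ℝ) + 1) ≠ 0 := by positivity
  have hf := fact_ne i
  refine TrivSqZeroExt.ext ?_ ?_ <;>
    simp [al, pow_two, TrivSqZeroExt.fst_mul, TrivSqZeroExt.snd_mul, fst_inl, snd_inl,
      fst_inr, snd_inr, fst_natCast, snd_natCast, fst_eps, snd_eps, smul_eq_mul,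
      op_smul_eq_smul, Nat.factorial_succ, H_succ, fst_two, snd_two, fst_four, snd_four] <;>
    field_simp <;> ring

lemma be_rec (i : ℕ) :
    (2 * ((i + 1 : ℕ) : A) - ε) ^ 2 * be (i + 1) = 4 * be i := by
  have hk : ((i:ℝ) + 1) ≠ 0 := by positivity
  have hf := fact_ne i
  refine TrivSqZeroExt.ext ?_ ?_ <;>
    simp [be, pow_two, TrivSqZeroExt.fst_mul, TrivSqZeroExt.snd_mul, fst_inl, snd_inl,
      fst_inr, snd_inr, fst_natCast, snd_natCast, fst_eps, snd_eps, smul_eq_mul,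
      op_smul_eq_smul, Nat.factorial_succ, H_succ, fst_two, snd_two, fst_four, snd_four] <;>
    field_simp <;> ring

/-! ### the power series -/

noncomputable def AA : PowerSeries A := PowerSeries.mk al
noncomputable def BB : PowerSeries A := PowerSeries.mk be

@[simp] lemma coeff_AA (j : ℕ) : PowerSeries.coeff j AA = al j := by simp [AA]
@[simp] lemma coeff_BB (j : ℕ) : PowerSeries.coeff j BB = be j := by simp [BB]

lemma MM_AA : Mo ε (Mo ε AA) = PowerSeries.C (4:A) * (X * AA) := by
  refine PowerSeries.ext fun j => ?_
  rw [PowerSeries.coeff_C_mul]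
  cases j with
  | zero =>
      simp only [coeff_Mo, coeff_AA, Nat.cast_zero, mul_zero, zero_add, al_zero, mul_one]
      rw [PowerSeries.coeff_zero_eq_constantCoeff, map_mul]
      simp [eps_mul_eps]
  | succ i =>
      rw [PowerSeries.coeff_succ_X_mul]
      simp only [coeff_Mo, coeff_AA]
      rw [← mul_assoc, ← pow_two, al_rec]

lemma MM_BB : Mo (-ε) (Mo (-ε) BB) = PowerSeries.C (4:A) * (X * BB) := by
  refine PowerSeries.ext fun j => ?_
  rw [PowerSeries.coeff_C_mul]
  cases j with
  | zero =>
      simp only [coeff_Mo, coeff_BB, Nat.cast_zero, mul_zero, zero_add, be_zero, mul_one]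
      rw [PowerSeries.coeff_zero_eq_constantCoeff, map_mul]
      simp [eps_mul_eps]
  | succ i =>
      rw [PowerSeries.coeff_succ_X_mul]
      simp only [coeff_Mo, coeff_BB]
      rw [← mul_assoc, ← pow_two, show 2 * ((i+1 : ℕ) : A) + -ε = 2 * ((i+1 : ℕ) : A) - ε by ring,
        be_rec]

noncomputable def Wr : PowerSeries A := Mo ε AA * BB - AA * Mo (-ε) BB

lemma T_Wr : Mo 0 Wr = 0 := by
  have h1 : Mo (0 : A) (Mo ε AA * BB) = Mo ε (Mo ε AA) * BB + Mo ε AA * Mo (-ε) BB := by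
    have := Mo_mul ε (-ε) (Mo ε AA) BB
    rwa [add_neg_cancel] at this
  have h2 : Mo (0 : A) (AA * Mo (-ε) BB) = Mo ε AA * Mo (-ε) BB + AA * Mo (-ε) (Mo (-ε) BB) := by
    have := Mo_mul ε (-ε) AA (Mo (-ε) BB)
    rwa [add_neg_cancel] at this
  rw [Wr, Mo_sub, h1, h2, MM_AA, MM_BB]
  ring

lemma Wr_coeff {q : ℕ} (hq : 1 ≤ q) : PowerSeries.coeff q Wr = 0 := by
  have h := congrArg (PowerSeries.coeff q) T_Wr
  simp only [coeff_Mo, map_zero, add_zero] at h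
  have hu : IsUnit (2 * (q : A)) := by
    rw [isUnit_iff_isUnit_fst]
    simp only [TrivSqZeroExt.fst_mul, fst_two, fst_natCast]
    refine (isUnit_iff_ne_zero).mpr ?_
    have : (0:ℝ) < 2 * q := by positivity
    exact ne_of_gt this
  exact (hu.mul_right_eq_zero).mp h

lemma Wr_zero : PowerSeries.coeff 0 Wr = 2 * ε := by
  rw [Wr, map_sub]
  rw [PowerSeries.coeff_zero_eq_constantCoeff, map_mul, map_mul]
  rw [← PowerSeries.coeff_zero_eq_constantCoeff]
  simp only [coeff_Mo, coeff_AA, coeff_BB, Nat.cast_zero, mul_zero, zero_add, al_zero, be_zero,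
    mul_one]
  ring

lemma coeff_iter (c : A) (f : PowerSeries A) (m j : ℕ) :
    PowerSeries.coeff j ((Mo c)^[m] f) = (2 * (j : A) + c) ^ m * PowerSeries.coeff j f := by
  induction m with
  | zero => simp
  | succ m ih =>
      rw [Function.iterate_succ_apply', coeff_Mo, ih, ← mul_assoc, ← pow_succ']


lemma struct (m : ℕ) : ∃ P Q : PowerSeries A,
    (∀ p, m < 2*p → PowerSeries.coeff p P = 0) ∧
    (∀ p, m ≤ 2*p → PowerSeries.coeff p Q = 0) ∧
    (Mo ε)^[m] AA = P * AA + Q * Mo ε AA ∧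
    (Mo (-ε))^[m] BB = P * BB + Q * Mo (-ε) BB := by
  induction m with
  | zero =>
      refine ⟨1, 0, fun p hp => ?_, fun p hp => ?_, by simp, by simp⟩
      · rw [PowerSeries.coeff_one]
        simp only [ite_eq_right_iff]
        intro h; omega
      · simp
  | succ m ih =>
      obtain ⟨P, Q, hP, hQ, hA, hB⟩ := ih
      refine ⟨Mo 0 P + PowerSeries.C (4:A) * (X * Q), P + Mo 0 Q, ?_, ?_, ?_, ?_⟩
      · intro p hp
        rw [map_add, PowerSeries.coeff_C_mul, coeff_Mo]
        rw [hP p (by omega), mul_zero, zero_add]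
        rcases Nat.eq_zero_or_pos p with rfl | hppos
        · omega
        · obtain ⟨p', rfl⟩ := Nat.exists_eq_add_of_le hppos
          rw [add_comm 1 p', PowerSeries.coeff_succ_X_mul, hQ p' (by omega), mul_zero]
      · intro p hp
        rw [map_add, coeff_Mo, hP p (by omega), hQ p (by omega), mul_zero, add_zero]
      · rw [Function.iterate_succ_apply', hA, Mo_add]
        rw [Mo_mul0 ε P AA, Mo_mul0 ε Q (Mo ε AA), MM_AA]
        ring
      · rw [Function.iterate_succ_apply', hB, Mo_add]
        rw [Mo_mul0 (-ε) P BB, Mo_mul0 (-ε) Q (Mo (-ε) BB), MM_BB]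
        ring

theorem key (n m : ℕ) (hm : m ≤ 2*n) :
    PowerSeries.coeff n ((Mo ε)^[m] AA * BB) =
      PowerSeries.coeff n (AA * (Mo (-ε))^[m] BB) := by
  obtain ⟨P, Q, hP, hQ, hA, hB⟩ := struct m
  have hdiff : (Mo ε)^[m] AA * BB - AA * (Mo (-ε))^[m] BB = Q * Wr := by
    rw [hA, hB, Wr]; ring
  have h2 : PowerSeries.coeff n (Q * Wr) = 0 := by
    rw [PowerSeries.coeff_mul]
    refine Finset.sum_eq_zero fun p hp => ?_
    have hp' : p.1 + p.2 = n := Finset.HasAntidiagonal.mem_antidiagonal.mp hp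
    rcases Nat.eq_zero_or_pos p.2 with h0 | hpos
    · have : p.1 = n := by omega
      rw [this, hQ n hm, zero_mul]
    · rw [Wr_coeff hpos, mul_zero]
  have := congrArg (PowerSeries.coeff n) hdiff
  rw [map_sub, h2] at this
  exact sub_eq_zero.mp this


@[simp] lemma fst_linp (p : ℕ) : TrivSqZeroExt.fst (2*(p:A)+ε) = 2*(p:ℝ) := by
  simp [TrivSqZeroExt.fst_mul]

@[simp] lemma snd_linp (p : ℕ) : TrivSqZeroExt.snd (2*(p:A)+ε) = 1 := by
  simp [TrivSqZeroExt.snd_mul, op_smul_eq_smul]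

@[simp] lemma fst_linm (p : ℕ) : TrivSqZeroExt.fst (2*(p:A)+ -ε) = 2*(p:ℝ) := by
  simp [TrivSqZeroExt.fst_mul]

@[simp] lemma snd_linm (p : ℕ) : TrivSqZeroExt.snd (2*(p:A)+ -ε) = -1 := by
  simp [TrivSqZeroExt.snd_mul, op_smul_eq_smul]

lemma e1 (m p q : ℕ) :
    TrivSqZeroExt.snd ((2*(p:A)+ε)^m * al p * be q) =
      ((2*(p:ℝ))^m * (H q - H p) + (m:ℝ) * (2*(p:ℝ))^(m-1)) *
        (((p.factorial:ℝ)^2)⁻¹ * ((q.factorial:ℝ)^2)⁻¹) := by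
  simp only [al, be, TrivSqZeroExt.fst_mul, TrivSqZeroExt.snd_mul, fst_pow, snd_pow,
    fst_add, snd_add, fst_inl, snd_inl, fst_inr, snd_inr, fst_linp, snd_linp,
    fst_two, snd_two, fst_natCast, snd_natCast, fst_eps, snd_eps,
    smul_eq_mul, op_smul_eq_smul, nsmul_eq_mul, Nat.pred_eq_sub_one, add_zero, zero_add,
    mul_one, mul_zero]
  ring

lemma e2 (m p q : ℕ) :
    TrivSqZeroExt.snd (al p * ((2*(q:A) + -ε)^m * be q)) =
      ((2*(q:ℝ))^m * (H q - H p) - (m:ℝ) * (2*(q:ℝ))^(m-1)) *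
        (((p.factorial:ℝ)^2)⁻¹ * ((q.factorial:ℝ)^2)⁻¹) := by
  simp only [al, be, TrivSqZeroExt.fst_mul, TrivSqZeroExt.snd_mul, fst_pow, snd_pow,
    fst_add, snd_add, fst_inl, snd_inl, fst_inr, snd_inr, fst_linm, snd_linm,
    fst_two, snd_two, fst_natCast, snd_natCast, fst_eps, snd_eps,
    TrivSqZeroExt.fst_neg, TrivSqZeroExt.snd_neg,
    smul_eq_mul, op_smul_eq_smul, nsmul_eq_mul, Nat.pred_eq_sub_one, add_zero, zero_add,
    mul_one, mul_zero]
  ring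

theorem cvanish (n m : ℕ) (hm : m ≤ 2 * n) :
    ∑ j ∈ Finset.range (n + 1),
      ((2 * (j:ℝ)) ^ m * (H (n - j) - H j) + (m:ℝ) * (2 * (j:ℝ)) ^ (m - 1)) *
        (((j.factorial : ℝ) ^ 2)⁻¹ * (((n - j).factorial : ℝ) ^ 2)⁻¹) = 0 := by
  have hk := key n m hm
  rw [PowerSeries.coeff_mul, PowerSeries.coeff_mul,
    Finset.Nat.sum_antidiagonal_eq_sum_range_succ_mk,
    Finset.Nat.sum_antidiagonal_eq_sum_range_succ_mk] at hk
  simp only [coeff_iter, coeff_AA, coeff_BB] at hk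
  have hs := congrArg TrivSqZeroExt.snd hk
  rw [TrivSqZeroExt.snd_sum, TrivSqZeroExt.snd_sum] at hs
  simp only [e1, e2] at hs
  -- reflect the RHS sum
  have hrefl := Finset.sum_range_reflect (fun j =>
    ((2 * ((n-j:ℕ):ℝ))^m * (H (n-j) - H j) - (m:ℝ) * (2 * ((n-j:ℕ):ℝ))^(m-1)) *
      (((j.factorial:ℝ)^2)⁻¹ * (((n-j).factorial:ℝ)^2)⁻¹)) (n+1)
  simp only [Nat.add_sub_cancel] at hrefl
  rw [← hrefl] at hs
  have hterm : ∀ j ∈ Finset.range (n+1),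
      ((2 * ((n-(n-j):ℕ):ℝ))^m * (H (n-(n-j)) - H (n-j)) - (m:ℝ) * (2 * ((n-(n-j):ℕ):ℝ))^(m-1)) *
        ((((n-j).factorial:ℝ)^2)⁻¹ * (((n-(n-j)).factorial:ℝ)^2)⁻¹)
      = -(((2 * (j:ℝ))^m * (H (n-j) - H j) + (m:ℝ) * (2 * (j:ℝ))^(m-1)) *
          (((j.factorial:ℝ)^2)⁻¹ * (((n-j).factorial:ℝ)^2)⁻¹)) := by
    intro j hj
    have hj' : j ≤ n := Nat.lt_succ_iff.mp (Finset.mem_range.mp hj)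
    rw [Nat.sub_sub_self hj']
    ring
  rw [Finset.sum_congr rfl hterm] at hs
  rw [Finset.sum_neg_distrib] at hs
  linarith [hs]


noncomputable def g (K : ℕ) (t : ℝ) : ℝ := ∑' i : ℕ, t ^ i / ((i + K).factorial : ℝ)

lemma g_summable (K : ℕ) (t : ℝ) :
    Summable fun i : ℕ => t ^ i / ((i + K).factorial : ℝ) := by
  apply Summable.of_norm
  refine Summable.of_nonneg_of_le (fun i => norm_nonneg _) (fun i => ?_)
    (Real.summable_pow_div_factorial |t|)
  rw [norm_div, norm_pow, Real.norm_eq_abs, Real.norm_eq_abs]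
  rw [Nat.abs_cast]
  apply div_le_div_of_nonneg_left ?_ ?_ ?_
  · positivity
  · exact_mod_cast Nat.factorial_pos i
  · exact_mod_cast Nat.factorial_le (Nat.le_add_right i K)

lemma exp_eq (K : ℕ) (t : ℝ) :
    Real.exp t = (∑ m ∈ Finset.range K, t ^ m / (m.factorial : ℝ)) + t ^ K * g K t := by
  have hsum : Summable fun i : ℕ => t ^ i / (i.factorial : ℝ) :=
    Real.summable_pow_div_factorial t
  have h0 : Real.exp t = ∑' i : ℕ, t ^ i / (i.factorial : ℝ) := by
    rw [Real.exp_eq_exp_ℝ, NormedSpace.exp_eq_tsum_div]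
  rw [h0, ← Summable.sum_add_tsum_nat_add K hsum]
  congr 1
  rw [g, ← tsum_mul_left]
  congr 1
  funext i
  rw [pow_add]
  ring

lemma g_bound (K : ℕ) (t : ℝ) : |g K t| ≤ Real.exp |t| := by
  have h1 : |g K t| ≤ ∑' i : ℕ, |t| ^ i / ((i + K).factorial : ℝ) := by
    simpa [Real.norm_eq_abs, g] using norm_tsum_le_tsum_norm ((g_summable K t).norm)
  have hsuma : Summable fun i : ℕ => |t| ^ i / ((i + K).factorial : ℝ) := by
    simpa [Real.norm_eq_abs, abs_div, abs_pow] using (g_summable K t).abs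
  have h2 : (∑' i : ℕ, |t| ^ i / ((i + K).factorial : ℝ)) ≤ ∑' i : ℕ, |t| ^ i / (i.factorial : ℝ) := by
    refine Summable.tsum_le_tsum (fun i => ?_) hsuma (Real.summable_pow_div_factorial |t|)
    apply div_le_div_of_nonneg_left ?_ ?_ ?_
    · positivity
    · exact_mod_cast Nat.factorial_pos i
    · exact_mod_cast Nat.factorial_le (Nat.le_add_right i K)
  have h3 : (∑' i : ℕ, |t| ^ i / (i.factorial : ℝ)) = Real.exp |t| := by
    rw [Real.exp_eq_exp_ℝ, NormedSpace.exp_eq_tsum_div]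
  linarith


lemma hEj (n j : ℕ) (x : ℝ) :
    Real.exp (2*(j:ℝ)*x) * (x + H (n-j) - H j) =
      (∑ m ∈ Finset.range (2*n+1),
        ((H (n-j) - H j) * (2*(j:ℝ))^m / m.factorial
          + (m:ℝ) * (2*(j:ℝ))^(m-1) / m.factorial) * x^m)
      + x^(2*n+1) * ((H (n-j) - H j) * (2*(j:ℝ))^(2*n+1) * g (2*n+1) (2*(j:ℝ)*x)
          + (2*(j:ℝ))^(2*n) * g (2*n) (2*(j:ℝ)*x)) := by
  set a : ℝ := 2*(j:ℝ) with ha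
  set c : ℝ := H (n-j) - H j with hc
  have e1 := exp_eq (2*n+1) (a*x)
  have e2 := exp_eq (2*n) (a*x)
  have hsplit : Real.exp (a*x) * (x + c) = c * Real.exp (a*x) + x * Real.exp (a*x) := by ring
  rw [show x + H (n-j) - H j = x + c by rw [hc]; ring] at *
  rw [hsplit]
  nth_rewrite 1 [e1]
  rw [e2]
  have hA : c * ((∑ m ∈ Finset.range (2*n+1), (a*x)^m / m.factorial) + (a*x)^(2*n+1) * g (2*n+1) (a*x))
      = (∑ m ∈ Finset.range (2*n+1), (c * a^m / m.factorial) * x^m)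
        + x^(2*n+1) * (c * a^(2*n+1) * g (2*n+1) (a*x)) := by
    rw [mul_add, Finset.mul_sum]
    congr 1
    · refine Finset.sum_congr rfl fun m _ => ?_
      rw [mul_pow]; ring
    · rw [mul_pow]; ring
  have hB : x * ((∑ m ∈ Finset.range (2*n), (a*x)^m / m.factorial) + (a*x)^(2*n) * g (2*n) (a*x))
      = (∑ m ∈ Finset.range (2*n+1), ((m:ℝ) * a^(m-1) / m.factorial) * x^m)
        + x^(2*n+1) * (a^(2*n) * g (2*n) (a*x)) := by
    rw [mul_add, Finset.mul_sum]
    congr 1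
    · rw [Finset.sum_range_succ' (fun m => ((m:ℝ) * a^(m-1) / m.factorial) * x^m) (2*n)]
      simp only [Nat.cast_zero, zero_mul, zero_div, Nat.cast_succ, Nat.add_sub_cancel,
        Nat.factorial_succ, pow_zero, add_zero]
      refine Finset.sum_congr rfl fun m _ => ?_
      have hm : ((m:ℝ) + 1) ≠ 0 := by positivity
      have hf : ((m.factorial : ℝ)) ≠ 0 := Nat.cast_ne_zero.mpr m.factorial_ne_zero
      rw [mul_pow]
      push_cast
      field_simp
      ring
    · rw [mul_pow]; ring
  rw [hA, hB]
  have hsum : ∑ m ∈ Finset.range (2*n+1),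
      ((c * a^m / m.factorial) + ((m:ℝ) * a^(m-1) / m.factorial)) * x^m
      = (∑ m ∈ Finset.range (2*n+1), (c * a^m / m.factorial) * x^m)
        + ∑ m ∈ Finset.range (2*n+1), ((m:ℝ) * a^(m-1) / m.factorial) * x^m := by
    rw [← Finset.sum_add_distrib]
    exact Finset.sum_congr rfl fun m _ => by ring
  rw [hsum]
  ring

noncomputable def Rem (n : ℕ) (x : ℝ) : ℝ :=
  ∑ j ∈ Finset.range (n+1),
    ((H (n-j) - H j) * (2*(j:ℝ))^(2*n+1) * g (2*n+1) (2*(j:ℝ)*x)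
      + (2*(j:ℝ))^(2*n) * g (2*n) (2*(j:ℝ)*x)) / ((j.factorial:ℝ)^2 * ((n-j).factorial:ℝ)^2)





lemma E_eq (n : ℕ) (x : ℝ) : E n x = x^(2*n+1) * Rem n x := by
  rw [E, Rem, Finset.mul_sum]
  have step1 : ∀ j ∈ Finset.range (n+1),
      Real.exp (2*(j:ℝ)*x) * (x + H (n-j) - H j) / ((j.factorial:ℝ)^2 * ((n-j).factorial:ℝ)^2)
      = (∑ m ∈ Finset.range (2*n+1),
          (x^m / m.factorial) * (((2*(j:ℝ))^m * (H (n-j) - H j) + (m:ℝ)*(2*(j:ℝ))^(m-1))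
            * (((j.factorial:ℝ)^2)⁻¹ * (((n-j).factorial:ℝ)^2)⁻¹)))
        + x^(2*n+1) * (((H (n-j) - H j) * (2*(j:ℝ))^(2*n+1) * g (2*n+1) (2*(j:ℝ)*x)
              + (2*(j:ℝ))^(2*n) * g (2*n) (2*(j:ℝ)*x))
            / ((j.factorial:ℝ)^2 * ((n-j).factorial:ℝ)^2)) := by
    intro j _
    rw [hEj n j x, add_div, Finset.sum_div]
    congr 1
    · refine Finset.sum_congr rfl fun m _ => ?_
      have h1 : ((j.factorial:ℝ)) ≠ 0 := fact_ne j
      have h2 : (((n-j).factorial:ℝ)) ≠ 0 := fact_ne (n-j)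
      have h3 : ((m.factorial:ℝ)) ≠ 0 := fact_ne m
      field_simp
    · rw [mul_div_assoc]
  rw [Finset.sum_congr rfl step1, Finset.sum_add_distrib]
  have hzero : (∑ j ∈ Finset.range (n+1), ∑ m ∈ Finset.range (2*n+1),
      (x^m / m.factorial) * (((2*(j:ℝ))^m * (H (n-j) - H j) + (m:ℝ)*(2*(j:ℝ))^(m-1))
        * (((j.factorial:ℝ)^2)⁻¹ * (((n-j).factorial:ℝ)^2)⁻¹))) = 0 := by
    rw [Finset.sum_comm]
    refine Finset.sum_eq_zero fun m hm => ?_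
    have hm' : m ≤ 2*n := by
      have := Finset.mem_range.mp hm; omega
    rw [← Finset.mul_sum]
    have hswap : (∑ j ∈ Finset.range (n+1),
        ((2*(j:ℝ))^m * (H (n-j) - H j) + (m:ℝ)*(2*(j:ℝ))^(m-1))
          * (((j.factorial:ℝ)^2)⁻¹ * (((n-j).factorial:ℝ)^2)⁻¹)) = 0 := by
      have heq : (∑ j ∈ Finset.range (n+1),
          ((2*(j:ℝ))^m * (H (n-j) - H j) + (m:ℝ)*(2*(j:ℝ))^(m-1))
            * (((j.factorial:ℝ)^2)⁻¹ * (((n-j).factorial:ℝ)^2)⁻¹))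
          = ∑ j ∈ Finset.range (n+1),
          ((2 * (j:ℝ)) ^ m * (H (n - j) - H j) + (m:ℝ) * (2 * (j:ℝ)) ^ (m - 1)) *
            (((j.factorial : ℝ) ^ 2)⁻¹ * (((n - j).factorial : ℝ) ^ 2)⁻¹) :=
        Finset.sum_congr rfl fun j _ => by ring
      rw [heq, cvanish n m hm']
    simp [hswap]
  rw [hzero, zero_add]

lemma term_bound (n j : ℕ) (x : ℝ) (hx : |x| ≤ 1) (hj : j ≤ n) :
    |((H (n-j) - H j) * (2*(j:ℝ))^(2*n+1) * g (2*n+1) (2*(j:ℝ)*x)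
        + (2*(j:ℝ))^(2*n) * g (2*n) (2*(j:ℝ)*x)) / ((j.factorial:ℝ)^2 * ((n-j).factorial:ℝ)^2)|
      ≤ (|H (n-j) - H j| * (2*(j:ℝ))^(2*n+1) + (2*(j:ℝ))^(2*n)) * Real.exp (2*(n:ℝ)+1)
          / ((j.factorial:ℝ)^2 * ((n-j).factorial:ℝ)^2) := by
  have hD : (0:ℝ) < (j.factorial:ℝ)^2 * ((n-j).factorial:ℝ)^2 := by positivity
  rw [abs_div, abs_of_pos hD]
  have hjr : (2*(j:ℝ)) ≤ 2*(n:ℝ) := by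
    have : (j:ℝ) ≤ (n:ℝ) := by exact_mod_cast hj
    linarith
  have hax : |2*(j:ℝ)*x| ≤ 2*(n:ℝ)+1 := by
    rw [abs_mul, abs_of_nonneg (show (0:ℝ) ≤ 2*(j:ℝ) by positivity)]
    nlinarith [abs_nonneg x]
  have g1b : |g (2*n+1) (2*(j:ℝ)*x)| ≤ Real.exp (2*(n:ℝ)+1) :=
    le_trans (g_bound _ _) (Real.exp_le_exp.mpr hax)
  have g2b : |g (2*n) (2*(j:ℝ)*x)| ≤ Real.exp (2*(n:ℝ)+1) :=
    le_trans (g_bound _ _) (Real.exp_le_exp.mpr hax)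
  gcongr
  calc |(H (n-j) - H j) * (2*(j:ℝ))^(2*n+1) * g (2*n+1) (2*(j:ℝ)*x)
        + (2*(j:ℝ))^(2*n) * g (2*n) (2*(j:ℝ)*x)|
      ≤ |(H (n-j) - H j) * (2*(j:ℝ))^(2*n+1) * g (2*n+1) (2*(j:ℝ)*x)|
        + |(2*(j:ℝ))^(2*n) * g (2*n) (2*(j:ℝ)*x)| := abs_add_le _ _
    _ = |H (n-j) - H j| * (2*(j:ℝ))^(2*n+1) * |g (2*n+1) (2*(j:ℝ)*x)|
        + (2*(j:ℝ))^(2*n) * |g (2*n) (2*(j:ℝ)*x)| := by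
        rw [abs_mul, abs_mul, abs_mul, abs_pow, abs_pow,
          abs_of_nonneg (show (0:ℝ) ≤ 2*(j:ℝ) by positivity)]
    _ ≤ |H (n-j) - H j| * (2*(j:ℝ))^(2*n+1) * Real.exp (2*(n:ℝ)+1)
        + (2*(j:ℝ))^(2*n) * Real.exp (2*(n:ℝ)+1) := by
        gcongr
    _ = (|H (n-j) - H j| * (2*(j:ℝ))^(2*n+1) + (2*(j:ℝ))^(2*n)) * Real.exp (2*(n:ℝ)+1) := by
        ring

end EnProof

/-- For every nonnegative integer `n`, `E_n(x) = O(x^{2n+1})` as `x → 0`. -/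
theorem stmt_1 (n : ℕ) : (fun x : ℝ => E n x) =O[nhds 0] (fun x : ℝ => x ^ (2 * n + 1)) := by
  rw [Asymptotics.isBigO_iff]
  refine ⟨∑ j ∈ Finset.range (n+1),
    (|H (n-j) - H j| * (2*(j:ℝ))^(2*n+1) + (2*(j:ℝ))^(2*n)) * Real.exp (2*(n:ℝ)+1)
      / ((j.factorial:ℝ)^2 * ((n-j).factorial:ℝ)^2), ?_⟩
  have hmem : ∀ᶠ x : ℝ in nhds 0, |x| ≤ 1 := by
    filter_upwards [Metric.ball_mem_nhds (0:ℝ) one_pos] with x hx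
    rw [Metric.mem_ball, Real.dist_eq, sub_zero] at hx
    linarith
  filter_upwards [hmem] with x hx
  rw [EnProof.E_eq, Real.norm_eq_abs, Real.norm_eq_abs, abs_mul]
  rw [mul_comm]
  apply mul_le_mul_of_nonneg_right ?_ (abs_nonneg _)
  calc |EnProof.Rem n x|
      ≤ ∑ j ∈ Finset.range (n+1),
        |((H (n-j) - H j) * (2*(j:ℝ))^(2*n+1) * EnProof.g (2*n+1) (2*(j:ℝ)*x)
          + (2*(j:ℝ))^(2*n) * EnProof.g (2*n) (2*(j:ℝ)*x))
            / ((j.factorial:ℝ)^2 * ((n-j).factorial:ℝ)^2)| := by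
        rw [EnProof.Rem]
        exact Finset.abs_sum_le_sum_abs _ _
    _ ≤ ∑ j ∈ Finset.range (n+1),
        (|H (n-j) - H j| * (2*(j:ℝ))^(2*n+1) + (2*(j:ℝ))^(2*n)) * Real.exp (2*(n:ℝ)+1)
          / ((j.factorial:ℝ)^2 * ((n-j).factorial:ℝ)^2) := by
        refine Finset.sum_le_sum fun j hj => ?_
        exact EnProof.term_bound n j x hx (Nat.lt_succ_iff.mp (Finset.mem_range.mp hj))
end

section
/- Let $\alpha$ be a zero of the Bessel function $J_0$. Then for all real x one has $-\frac{J_0(\alpha e^{x})}{\alpha J_1(\alpha)} = \sum_{n\ge 0}\left(-\frac{\alpha^2}{4}\right)^n E_n(x)$, where $E_n(x) = \sum_{j=0}^{n}\frac{e^{2jx}(x+H_{n-j}-H_j)}{j!^2(n-j)!^2}$. -/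
open Finset

/-- The Bessel function of the first kind of order 0: `J₀(x) = ∑_{n≥0} (-x²/4)ⁿ/n!²`. -/
noncomputable def J0 (x : ℝ) : ℝ := ∑' n : ℕ, (-(x ^ 2) / 4) ^ n / ((n.factorial : ℝ) ^ 2)

/-- The Bessel function of the first kind of order 1, via `J₀' = -J₁`. -/
noncomputable def J1 (x : ℝ) : ℝ := -(deriv J0 x)

namespace Stmt2Aux

noncomputable def S (a : ℕ → ℝ) (t : ℝ) : ℝ := ∑' n, a n * t ^ n

def Dc (a : ℕ → ℝ) : ℕ → ℝ := fun n => (n + 1) * a (n + 1)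

def Nice (a : ℕ → ℝ) : Prop := ∃ C : ℝ, 1 ≤ C ∧ ∀ n, |a n| ≤ C ^ (n + 1) / n.factorial

lemma Nice.dc {a : ℕ → ℝ} (h : Nice a) : Nice (Dc a) := by
  obtain ⟨C, hC, hb⟩ := h
  have hC0 : (0:ℝ) < C := lt_of_lt_of_le one_pos hC
  refine ⟨C ^ 2, one_le_pow₀ hC, fun n => ?_⟩
  have h1 : |Dc a n| = (n + 1 : ℝ) * |a (n + 1)| := by
    rw [Dc, abs_mul, abs_of_nonneg (by positivity : (0:ℝ) ≤ (n:ℝ) + 1)]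
  rw [h1]
  calc (n + 1 : ℝ) * |a (n + 1)| ≤ (n + 1 : ℝ) * (C ^ (n + 2) / (n + 1).factorial) := by
        have := hb (n + 1); gcongr
    _ = C ^ (n + 2) / n.factorial := by
        rw [Nat.factorial_succ]; push_cast; field_simp
    _ ≤ (C ^ 2) ^ (n + 1) / n.factorial := by
        rw [← pow_mul]
        gcongr
        · omega

lemma Nice.mul_nat {a : ℕ → ℝ} (h : Nice a) : Nice (fun n => (n : ℝ) * a n) := by
  obtain ⟨C, hC, hb⟩ := h
  have hC0 : (0:ℝ) < C := lt_of_lt_of_le one_pos hC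
  refine ⟨2 * C, by linarith, fun n => ?_⟩
  have h1 : |(n : ℝ) * a n| = (n : ℝ) * |a n| := by
    rw [abs_mul, abs_of_nonneg (by positivity : (0:ℝ) ≤ (n:ℝ))]
  rw [h1]
  calc (n : ℝ) * |a n| ≤ (2:ℝ) ^ n * (C ^ (n + 1) / n.factorial) := by
        have h2 : (n : ℝ) ≤ 2 ^ n := by exact_mod_cast (Nat.lt_two_pow_self (n := n)).le
        have h3 := hb n
        have habs : (0:ℝ) ≤ |a n| := abs_nonneg _
        calc (n:ℝ) * |a n| ≤ 2 ^ n * |a n| := by gcongr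
          _ ≤ 2 ^ n * (C ^ (n+1) / n.factorial) := by gcongr
    _ ≤ (2:ℝ) ^ (n + 1) * (C ^ (n+1) / n.factorial) := by
        gcongr
        · norm_num
        · omega
    _ = (2 * C) ^ (n + 1) / n.factorial := by rw [mul_pow]; ring

lemma Nice.const_mul {a : ℕ → ℝ} (h : Nice a) (r : ℝ) : Nice (fun n => r * a n) := by
  obtain ⟨C, hC, hb⟩ := h
  have hC0 : (0:ℝ) < C := lt_of_lt_of_le one_pos hC
  refine ⟨(|r| + 1) * C, by nlinarith [abs_nonneg r], fun n => ?_⟩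
  rw [abs_mul]
  calc |r| * |a n| ≤ |r| * (C ^ (n+1) / n.factorial) := by gcongr; exact hb n
    _ ≤ (|r| + 1) ^ (n+1) * (C ^ (n+1) / n.factorial) := by
        have hX : (0:ℝ) ≤ C ^ (n+1) / n.factorial := by positivity
        have hr : |r| ≤ (|r|+1)^(n+1) :=
          le_trans (by linarith) (le_self_pow₀ (by linarith [abs_nonneg r]) (by omega))
        exact mul_le_mul_of_nonneg_right hr hX
    _ = ((|r| + 1) * C) ^ (n+1) / n.factorial := by rw [mul_pow]; ring

lemma Nice.summable_norm {a : ℕ → ℝ} (h : Nice a) (t : ℝ) :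
    Summable (fun n => ‖a n * t ^ n‖) := by
  obtain ⟨C, hC, hb⟩ := h
  have hC0 : (0:ℝ) < C := lt_of_lt_of_le one_pos hC
  refine Summable.of_nonneg_of_le (fun n => norm_nonneg _) (fun n => ?_)
    ((Real.summable_pow_div_factorial (C * |t|)).mul_left C)
  have : ‖a n * t ^ n‖ = |a n| * |t| ^ n := by
    rw [norm_mul, norm_pow]; rfl
  rw [this]
  calc |a n| * |t| ^ n ≤ C ^ (n+1) / n.factorial * |t| ^ n := by gcongr; exact hb n
    _ = C * ((C * |t|) ^ n / n.factorial) := by rw [mul_pow]; ring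

lemma Nice.summable {a : ℕ → ℝ} (h : Nice a) (t : ℝ) :
    Summable (fun n => a n * t ^ n) := (h.summable_norm t).of_norm


lemma H_succ (n : ℕ) : H (n + 1) = H n + 1 / ((n:ℝ) + 1) := by
  rw [H, Finset.sum_range_succ, H]

lemma H_nonneg (n : ℕ) : 0 ≤ H n := by
  apply Finset.sum_nonneg
  intro i _
  positivity

lemma H_le (n : ℕ) : H n ≤ n := by
  induction n with
  | zero => simp [H]
  | succ n ih =>
    rw [H_succ]
    push_cast
    have : 1 / ((n:ℝ) + 1) ≤ 1 := by
      rw [div_le_one (by positivity)]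
      linarith [Nat.cast_nonneg (α := ℝ) n]
    linarith

noncomputable def ca : ℕ → ℝ := fun n => (-1/4) ^ n / ((n.factorial : ℝ)) ^ 2
noncomputable def cb : ℕ → ℝ := fun n => (-1/4) ^ n * H n / ((n.factorial : ℝ)) ^ 2

lemma fact_pos (n : ℕ) : (0:ℝ) < (n.factorial : ℝ) := by exact_mod_cast n.factorial_pos

lemma nice_ca : Nice ca := by
  refine ⟨1, le_refl 1, fun n => ?_⟩
  have hf := fact_pos n
  have hsf : (n.factorial : ℝ) ≥ 1 := by exact_mod_cast n.factorial_pos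
  rw [ca, abs_div, abs_pow, one_pow]
  have h1 : |(-1/4 : ℝ)| = 1/4 := by norm_num
  rw [h1, abs_of_nonneg (by positivity : (0:ℝ) ≤ ((n.factorial:ℝ))^2)]
  apply div_le_div₀ (by norm_num) _ hf _
  · calc ((1:ℝ)/4) ^ n ≤ 1 ^ n := by gcongr <;> norm_num
      _ = 1 := one_pow n
  · calc (n.factorial : ℝ) = n.factorial * 1 := (mul_one _).symm
      _ ≤ n.factorial * n.factorial := by gcongr
      _ = ((n.factorial:ℝ)) ^ 2 := (sq _).symm

lemma nice_cb : Nice cb := by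
  refine ⟨1, le_refl 1, fun n => ?_⟩
  have hf := fact_pos n
  have hsf : (n.factorial : ℝ) ≥ 1 := by exact_mod_cast n.factorial_pos
  have hnf : (n:ℝ) ≤ (n.factorial : ℝ) := by exact_mod_cast Nat.self_le_factorial n
  rw [cb, abs_div, abs_mul, abs_pow, one_pow]
  have h1 : |(-1/4 : ℝ)| = 1/4 := by norm_num
  rw [h1, abs_of_nonneg (H_nonneg n), abs_of_nonneg (by positivity : (0:ℝ) ≤ ((n.factorial:ℝ))^2)]
  rw [div_le_div_iff₀ (by positivity) hf]
  calc (1/4:ℝ) ^ n * H n * n.factorial ≤ 1 * (n:ℝ) * n.factorial := by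
        apply mul_le_mul _ le_rfl (le_of_lt hf) (by norm_num)
        apply mul_le_mul _ (H_le n) (H_nonneg n) (by norm_num)
        calc ((1:ℝ)/4) ^ n ≤ 1 ^ n := by gcongr <;> norm_num
          _ = 1 := one_pow n
    _ ≤ 1 * (n.factorial:ℝ) * n.factorial := by gcongr
    _ = 1 * ((n.factorial:ℝ))^2 := by ring
  
lemma ca_zero : ca 0 = 1 := by simp [ca]

lemma ca_rec (n : ℕ) : 4 * ((n:ℝ) + 1) ^ 2 * ca (n + 1) + ca n = 0 := by
  have hf := fact_pos n
  have hf1 := fact_pos (n + 1)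
  rw [ca, ca, Nat.factorial_succ]
  push_cast
  field_simp
  ring

lemma cb_rec (n : ℕ) :
    4 * ((n:ℝ) + 1) ^ 2 * cb (n + 1) + cb n = 4 * (((n:ℝ) + 1) * ca (n + 1)) := by
  have hf := fact_pos n
  have hf1 := fact_pos (n + 1)
  have hn1 : ((n:ℝ) + 1) ≠ 0 := by positivity
  rw [cb, cb, ca, Nat.factorial_succ, H_succ]
  push_cast
  field_simp
  ring


lemma Nice.hasDerivAt {a : ℕ → ℝ} (h : Nice a) (t : ℝ) :
    HasDerivAt (S a) (S (Dc a) t) t := by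
  obtain ⟨C, hC, hb⟩ := h
  have hC0 : (0:ℝ) < C := lt_of_lt_of_le one_pos hC
  set R : ℝ := |t| + 1 with hR
  have hR1 : (1:ℝ) ≤ R := by simp [hR]
  have hR0 : (0:ℝ) < R := lt_of_lt_of_le one_pos hR1
  set u : ℕ → ℝ := fun n => C * ((2 * C * R) ^ n / n.factorial) with hu
  have hus : Summable u := (Real.summable_pow_div_factorial (2 * C * R)).mul_left C
  have hbound : ∀ (n : ℕ) (y : ℝ), y ∈ Metric.ball (0:ℝ) R →
      ‖a n * ((n:ℝ) * y ^ (n - 1))‖ ≤ u n := by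
    intro n y hy
    have hyR : |y| ≤ R := by
      have := Metric.mem_ball.mp hy
      rw [Real.dist_eq, sub_zero] at this
      exact this.le
    have h1 : ‖a n * ((n:ℝ) * y ^ (n - 1))‖ = |a n| * ((n:ℝ) * |y| ^ (n - 1)) := by
      simp [Real.norm_eq_abs, abs_mul, abs_pow, Nat.abs_cast]
    rw [h1]
    have h2 : |y| ^ (n-1) ≤ R ^ n := by
      calc |y| ^ (n-1) ≤ R ^ (n-1) := by gcongr
        _ ≤ R ^ n := pow_le_pow_right₀ hR1 (by omega)
    have h3 : (n:ℝ) ≤ 2 ^ n := by exact_mod_cast (Nat.lt_two_pow_self (n := n)).le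
    have key1 : |a n| * ((n:ℝ) * |y| ^ (n-1)) ≤ (C ^ (n+1) / n.factorial) * (2 ^ n * R ^ n) :=
      mul_le_mul (hb n) (mul_le_mul h3 h2 (by positivity) (by positivity))
        (by positivity) (by positivity)
    have key2 : (C ^ (n+1) / n.factorial) * (2 ^ n * R ^ n) = u n := by
      simp only [hu, mul_pow]
      field_simp
      ring
    rw [← key2]
    exact key1
  have hderiv : ∀ (n : ℕ) (y : ℝ), y ∈ Metric.ball (0:ℝ) R →
      HasDerivAt (fun z => a n * z ^ n) (a n * ((n:ℝ) * y ^ (n - 1))) y :=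
    fun n y _ => (hasDerivAt_pow n y).const_mul (a n)
  have hmem : t ∈ Metric.ball (0:ℝ) R := by
    rw [Metric.mem_ball, Real.dist_eq, sub_zero, hR]
    exact lt_add_one _
  have h0mem : (0:ℝ) ∈ Metric.ball (0:ℝ) R := Metric.mem_ball_self hR0
  have hg0 : Summable fun n => a n * (0:ℝ) ^ n := Nice.summable ⟨C, hC, hb⟩ 0
  have key := hasDerivAt_tsum_of_isPreconnected hus Metric.isOpen_ball
    (convex_ball (0:ℝ) R).isPreconnected hderiv hbound h0mem hg0 hmem
  have hsum' : Summable fun n => a n * ((n:ℝ) * t ^ (n - 1)) :=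
    Summable.of_norm_bounded hus (fun n => hbound n t hmem)
  have heq : (∑' n, a n * ((n:ℝ) * t ^ (n - 1))) = S (Dc a) t := by
    rw [Summable.tsum_eq_zero_add hsum']
    simp only [Nat.cast_zero, zero_mul, mul_zero, zero_add]
    exact tsum_congr fun n => by
      simp only [Dc, Nat.add_sub_cancel]
      push_cast
      ring
  rw [← heq]
  exact key

lemma S_zero (a : ℕ → ℝ) : S a 0 = a 0 := by
  rw [S, tsum_eq_single 0 (fun n hn => by rw [zero_pow hn, mul_zero])]
  simp

/-- From the coefficient recursion `4(n+1)² p(n+1) + p n = q n` deduce the ODE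
`4 t S(p)'' + 4 S(p)' + S(p) = S(q)`, phrased via shifted coefficient series. -/
lemma ode {p q : ℕ → ℝ} (hp : Nice p) (hq : Nice q)
    (hrec : ∀ n : ℕ, 4 * ((n:ℝ) + 1) ^ 2 * p (n + 1) + p n = q n) (t : ℝ) :
    4 * t * S (Dc (Dc p)) t + 4 * S (Dc p) t + S p t = S q t := by
  have hnw : Nice fun n => (n:ℝ) * Dc p n := hp.dc.mul_nat
  have hw : Summable (fun n => ((4:ℝ) * n * Dc p n) * t ^ n) := by
    have := (hnw.const_mul 4).summable t
    simpa [mul_assoc] using this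
  have hshift : (4 * t) * S (Dc (Dc p)) t = ∑' n, ((4:ℝ) * n * Dc p n) * t ^ n := by
    rw [S, ← tsum_mul_left, Summable.tsum_eq_zero_add hw]
    simp only [Nat.cast_zero, mul_zero, zero_mul, zero_add]
    exact tsum_congr fun n => by
      simp only [Dc]
      push_cast
      ring
  have h1 : Summable (fun n => (4:ℝ) * Dc p n * t ^ n) := by
    have := (hp.dc.const_mul 4).summable t
    simpa using this
  have h2 : Summable (fun n => p n * t ^ n) := hp.summable t
  calc 4 * t * S (Dc (Dc p)) t + 4 * S (Dc p) t + S p t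
      = (∑' n, ((4:ℝ) * n * Dc p n) * t ^ n) + (∑' n, (4:ℝ) * Dc p n * t ^ n)
          + ∑' n, p n * t ^ n := by
        rw [hshift, S, S, ← tsum_mul_left]
        congr 1
        · congr 1
          exact tsum_congr fun n => by ring
    _ = ∑' n, (((4:ℝ) * n * Dc p n) * t ^ n + (4:ℝ) * Dc p n * t ^ n + p n * t ^ n) := by
        rw [← Summable.tsum_add hw h1, ← Summable.tsum_add (hw.add h1) h2]
    _ = S q t := by
        refine tsum_congr fun n => ?_
        have := hrec n
        simp only [Dc]
        push_cast
        linear_combination t ^ n * this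

lemma nice_zero : Nice (fun _ => (0:ℝ)) :=
  ⟨1, le_refl 1, fun n => by simp only [abs_zero]; positivity⟩

lemma nice_q : Nice (fun n => 4 * (((n:ℝ) + 1) * ca (n + 1))) := by
  obtain ⟨C, hC, hb⟩ := nice_ca.dc
  refine ⟨4 * C, by linarith, fun n => ?_⟩
  have := hb n
  simp only [Dc] at this
  calc |4 * (((n:ℝ) + 1) * ca (n + 1))| = 4 * |((n:ℝ) + 1) * ca (n + 1)| := by
        rw [abs_mul]; norm_num
    _ ≤ 4 * (C ^ (n+1) / n.factorial) := by gcongr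
    _ ≤ (4 * C) ^ (n+1) / n.factorial := by
        rw [mul_pow, mul_div_assoc]
        apply mul_le_mul_of_nonneg_right _ (by positivity)
        exact le_self_pow₀ (by norm_num) (Nat.succ_ne_zero n)

lemma ode1 (t : ℝ) : 4 * t * S (Dc (Dc ca)) t + 4 * S (Dc ca) t + S ca t = 0 := by
  have h := ode nice_ca nice_zero (fun n => by rw [ca_rec n]) t
  rw [h, S]
  simp

lemma ode2 (t : ℝ) :
    4 * t * S (Dc (Dc cb)) t + 4 * S (Dc cb) t + S cb t = 4 * S (Dc ca) t := by
  have h := ode nice_cb nice_q (fun n => cb_rec n) t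
  rw [h, S, S, ← tsum_mul_left]
  exact tsum_congr fun n => by simp only [Dc]; ring

noncomputable def Wf (t : ℝ) : ℝ :=
  S ca t ^ 2 + 2 * t * (S (Dc ca) t * S cb t - S ca t * S (Dc cb) t)

lemma Wf_hasDeriv (t : ℝ) : HasDerivAt Wf 0 t := by
  have hg := nice_ca.hasDerivAt t
  have hg' := nice_ca.dc.hasDerivAt t
  have hk := nice_cb.hasDerivAt t
  have hk' := nice_cb.dc.hasDerivAt t
  have hid : HasDerivAt (fun y : ℝ => 2 * y) 2 t := by
    simpa using (hasDerivAt_id t).const_mul (2:ℝ)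
  have h := (hg.pow 2).add ((hid.mul ((hg'.mul hk).sub (hg.mul hk'))))
  have h1 := ode1 t
  have h2 := ode2 t
  refine h.congr_deriv ?_
  simp only [Pi.mul_apply, Pi.sub_apply]
  linear_combination (S cb t / 2) * h1 - (S ca t / 2) * h2

lemma Wf_one (t : ℝ) : Wf t = 1 := by
  have hconst : Wf t = Wf 0 :=
    is_const_of_deriv_eq_zero (fun y => (Wf_hasDeriv y).differentiableAt)
      (fun y => (Wf_hasDeriv y).deriv) t 0
  rw [hconst, Wf, S_zero, ca_zero]
  ring


end Stmt2Aux

open Stmt2Aux in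
/-- If `α` is a zero of `J₀`, then for all real `x`,
`-J₀(α eˣ)/(α J₁(α)) = ∑_{n≥0} (-α²/4)ⁿ Eₙ(x)`. -/
theorem stmt_2 (α : ℝ) (hα : J0 α = 0) (x : ℝ) :
    -(J0 (α * Real.exp x)) / (α * J1 α) = ∑' n : ℕ, (-(α ^ 2) / 4) ^ n * E n x := by
  have hJ0 : ∀ y : ℝ, J0 y = S ca (y ^ 2) := by
    intro y
    refine tsum_congr fun n => ?_
    rw [ca, show -(y^2)/4 = (-1/4) * y^2 by ring, mul_pow]
    ring
  have hgα : S ca (α ^ 2) = 0 := by rw [← hJ0]; exact hα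
  have hkey : 2 * α ^ 2 * (S (Dc ca) (α ^ 2) * S cb (α ^ 2)) = 1 := by
    have h := Wf_one (α ^ 2)
    rw [Wf, hgα] at h
    linear_combination h
  have hder : HasDerivAt J0 (S (Dc ca) (α ^ 2) * (2 * α)) α := by
    have hsq : HasDerivAt (fun y : ℝ => y ^ 2) (2 * α) α := by
      simpa using hasDerivAt_pow 2 α
    have h := (nice_ca.hasDerivAt (α ^ 2)).comp α hsq
    have hfun : J0 = S ca ∘ (fun y : ℝ => y ^ 2) := funext fun y => hJ0 y
    rw [hfun]
    exact h
  have hJ1 : α * J1 α = -(2 * α ^ 2 * S (Dc ca) (α ^ 2)) := by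
    rw [J1, hder.deriv]; ring
  set s : ℝ := (α * Real.exp x) ^ 2 with hs
  have hsA := nice_ca.summable_norm s
  have hsB := nice_ca.summable_norm (α ^ 2)
  have hsC := nice_cb.summable_norm (α ^ 2)
  have hsD := nice_cb.summable_norm s
  have hterm : ∀ n : ℕ, (-(α ^ 2) / 4) ^ n * E n x =
      x * (∑ j ∈ range (n+1), (ca j * s ^ j) * (ca (n-j) * (α ^ 2) ^ (n-j)))
      + (∑ j ∈ range (n+1), (ca j * s ^ j) * (cb (n-j) * (α ^ 2) ^ (n-j)))
      - (∑ j ∈ range (n+1), (cb j * s ^ j) * (ca (n-j) * (α ^ 2) ^ (n-j))) := by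
    intro n
    rw [E, Finset.mul_sum, Finset.mul_sum, ← Finset.sum_add_distrib, ← Finset.sum_sub_distrib]
    refine Finset.sum_congr rfl fun j hj => ?_
    have hj' : j ≤ n := Nat.lt_succ_iff.mp (Finset.mem_range.mp hj)
    obtain ⟨m, rfl⟩ := Nat.exists_eq_add_of_le hj'
    rw [Nat.add_sub_cancel_left]
    have hexp : Real.exp (2 * (j:ℝ) * x) = (Real.exp x) ^ (2 * j) := by
      rw [← Real.exp_nat_mul]
      congr 1
      push_cast
      ring
    rw [ca, ca, cb, cb, hexp, hs]
    have h2 : ((α * Real.exp x) ^ 2) ^ j = α ^ j * α ^ j * ((Real.exp x) ^ (2 * j)) := by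
      calc ((α * Real.exp x) ^ 2) ^ j = (α * Real.exp x) ^ (2 * j) := by rw [← pow_mul]
        _ = α ^ (2 * j) * (Real.exp x) ^ (2 * j) := mul_pow _ _ _
        _ = α ^ j * α ^ j * ((Real.exp x) ^ (2 * j)) := by rw [two_mul, pow_add]
    rw [h2]
    have hfj := (Nat.cast_pos (α := ℝ)).mpr j.factorial_pos
    have hfm := (Nat.cast_pos (α := ℝ)).mpr m.factorial_pos
    field_simp
    ring
  have hab : Summable (fun n => ∑ j ∈ range (n+1), (ca j * s ^ j) * (ca (n-j) * (α ^ 2) ^ (n-j))) :=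
    (summable_norm_sum_mul_range_of_summable_norm hsA hsB).of_norm
  have hac : Summable (fun n => ∑ j ∈ range (n+1), (ca j * s ^ j) * (cb (n-j) * (α ^ 2) ^ (n-j))) :=
    (summable_norm_sum_mul_range_of_summable_norm hsA hsC).of_norm
  have hdb : Summable (fun n => ∑ j ∈ range (n+1), (cb j * s ^ j) * (ca (n-j) * (α ^ 2) ^ (n-j))) :=
    (summable_norm_sum_mul_range_of_summable_norm hsD hsB).of_norm
  have hrhs : (∑' n : ℕ, (-(α ^ 2) / 4) ^ n * E n x) = S ca s * S cb (α ^ 2) := by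
    calc (∑' n : ℕ, (-(α ^ 2) / 4) ^ n * E n x)
        = ∑' n : ℕ, (x * (∑ j ∈ range (n+1), (ca j * s ^ j) * (ca (n-j) * (α ^ 2) ^ (n-j)))
          + (∑ j ∈ range (n+1), (ca j * s ^ j) * (cb (n-j) * (α ^ 2) ^ (n-j)))
          - (∑ j ∈ range (n+1), (cb j * s ^ j) * (ca (n-j) * (α ^ 2) ^ (n-j)))) :=
          tsum_congr hterm
      _ = x * (∑' n, ∑ j ∈ range (n+1), (ca j * s ^ j) * (ca (n-j) * (α ^ 2) ^ (n-j)))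
          + (∑' n, ∑ j ∈ range (n+1), (ca j * s ^ j) * (cb (n-j) * (α ^ 2) ^ (n-j)))
          - (∑' n, ∑ j ∈ range (n+1), (cb j * s ^ j) * (ca (n-j) * (α ^ 2) ^ (n-j))) := by
          rw [Summable.tsum_sub ((hab.mul_left x).add hac) hdb, Summable.tsum_add (hab.mul_left x) hac,
            tsum_mul_left]
      _ = x * (S ca s * S ca (α ^ 2)) + S ca s * S cb (α ^ 2) - S cb s * S ca (α ^ 2) := by
          rw [← tsum_mul_tsum_eq_tsum_sum_range_of_summable_norm hsA hsB,
            ← tsum_mul_tsum_eq_tsum_sum_range_of_summable_norm hsA hsC,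
            ← tsum_mul_tsum_eq_tsum_sum_range_of_summable_norm hsD hsB]
          rfl
      _ = S ca s * S cb (α ^ 2) := by rw [hgα]; ring
  rw [hrhs, hJ1, hJ0 (α * Real.exp x), ← hs]
  have hne : 2 * α ^ 2 * S (Dc ca) (α ^ 2) ≠ 0 := by
    intro h
    rw [show 2 * α ^ 2 * (S (Dc ca) (α ^ 2) * S cb (α ^ 2))
      = (2 * α ^ 2 * S (Dc ca) (α ^ 2)) * S cb (α ^ 2) by ring, h, zero_mul] at hkey
    norm_num at hkey
  rw [neg_div_neg_eq, div_eq_iff hne]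
  linear_combination (-(S ca s)) * hkey
end
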